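/- arXiv:2310.20070 — 2 statements merged into one kernel-verified Lean document; each statement's English description precedes it below -/
import Mathlib

section
/- Let μ > 0 and v₀ > 0, and define I(k) = ∫_{−e(k)}^{e(k)} h(k, p(k,y), l(k,y))² · (e(k)² − y²) / (A₁(e(k),y) · A₂(e(k),y)) dy for k > 0. Then the boundary value of the imaginary part of the self-energy at z = e(k) + i0, namely Im Σ(k) := −(1/(8πk)) · I(k), satisfies Im Σ(k) = −c_Bel · k⁵ + O(k⁶) as k → 0⁺, where c_Bel = 3 v₀ / (320 π μ). In particular the phonon damping rate is proportional to k⁵ for small k (Beliaev damping). -/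
open Real Filter Asymptotics Topology MeasureTheory

/-- Bogoliubov dispersion relation (contact interaction). -/
noncomputable def disp (μ k : ℝ) : ℝ := Real.sqrt (k^4/4 + μ*k^2)

/-- Bogoliubov coefficient σ. -/
noncomputable def sig (μ k : ℝ) : ℝ :=
  Real.sqrt ((Real.sqrt ((disp μ k)^2 + μ^2) + disp μ k) / (2 * disp μ k))

/-- Bogoliubov coefficient γ. -/
noncomputable def gam (μ k : ℝ) : ℝ :=
  Real.sqrt ((Real.sqrt ((disp μ k)^2 + μ^2) - disp μ k) / (2 * disp μ k))

/-- Cubic coupling function h(k,p,l). -/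
noncomputable def hcub (μ v₀ k p l : ℝ) : ℝ :=
  2 * Real.sqrt (μ * v₀) *
    (sig μ p * gam μ k * gam μ l + sig μ l * gam μ k * gam μ p
      + sig μ p * sig μ l * sig μ k - gam μ p * sig μ k * sig μ l
      - gam μ l * sig μ k * sig μ p - gam μ p * gam μ l * gam μ k)

noncomputable def A1 (μ x y : ℝ) : ℝ := Real.sqrt ((x + y)^2 + 4*μ^2)
noncomputable def A2 (μ x y : ℝ) : ℝ := Real.sqrt ((x - y)^2 + 4*μ^2)

/-- p(k,y): unique positive solution of e(p) = (e(k)+y)/2. -/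
noncomputable def pp (μ k y : ℝ) : ℝ :=
  Real.sqrt (2 * (Real.sqrt (((disp μ k + y)/2)^2 + μ^2) - μ))

/-- l(k,y): unique positive solution of e(l) = (e(k)−y)/2. -/
noncomputable def ll (μ k y : ℝ) : ℝ :=
  Real.sqrt (2 * (Real.sqrt (((disp μ k - y)/2)^2 + μ^2) - μ))

/-- The on-shell self-energy integral I(k). -/
noncomputable def I (μ v₀ k : ℝ) : ℝ :=
  ∫ y in (-(disp μ k))..(disp μ k),
    (hcub μ v₀ k (pp μ k y) (ll μ k y))^2 * ((disp μ k)^2 - y^2)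
      / (A1 μ (disp μ k) y * A2 μ (disp μ k) y)

/-- Boundary value of the imaginary part of the self-energy at z = e(k)+i0. -/
noncomputable def ImSigma (μ v₀ k : ℝ) : ℝ := -(1/(8*Real.pi*k)) * I μ v₀ k

/-! ### Auxiliary definitions -/

noncomputable def En (μ x : ℝ) : ℝ := Real.sqrt (x^2 + μ^2)

noncomputable def uu (μ x : ℝ) : ℝ := En μ x + μ

noncomputable def Tf (μ e y : ℝ) : ℝ :=
  (e-y)/2 * uu μ e * uu μ ((e+y)/2) + (e+y)/2 * uu μ e * uu μ ((e-y)/2)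
    - e * uu μ ((e+y)/2) * uu μ ((e-y)/2) + 3 * e * ((e+y)/2) * ((e-y)/2)

noncomputable def Fn (μ v₀ e y : ℝ) : ℝ :=
  μ * v₀ * (Tf μ e y)^2
    / (4 * e * (uu μ e * uu μ ((e+y)/2) * uu μ ((e-y)/2)
        * En μ ((e+y)/2) * En μ ((e-y)/2)))

lemma En_sq (μ x : ℝ) : (En μ x)^2 = x^2 + μ^2 := Real.sq_sqrt (by positivity)

lemma En_nonneg (μ x : ℝ) : 0 ≤ En μ x := Real.sqrt_nonneg _

lemma mu_le_En (μ x : ℝ) (hμ : 0 ≤ μ) : μ ≤ En μ x := by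
  rw [En, show μ = Real.sqrt (μ^2) from (Real.sqrt_sq hμ).symm]
  exact Real.sqrt_le_sqrt (by nlinarith [Real.sq_sqrt (sq_nonneg μ), sq_nonneg x])

lemma x_le_En (μ x : ℝ) (hx : 0 ≤ x) : x ≤ En μ x := by
  rw [En, show x = Real.sqrt (x^2) from (Real.sqrt_sq hx).symm]
  exact Real.sqrt_le_sqrt (by nlinarith [Real.sq_sqrt (sq_nonneg x), sq_nonneg μ])

lemma En_le (μ x : ℝ) (hμ : 0 < μ) : En μ x ≤ μ + x^2/(2*μ) := by
  rw [En]
  calc Real.sqrt (x^2+μ^2) ≤ Real.sqrt ((μ + x^2/(2*μ))^2) := by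
        apply Real.sqrt_le_sqrt
        have h1 : 0 < (2*μ) := by linarith
        field_simp
        nlinarith [sq_nonneg (x^2), sq_nonneg x, sq_nonneg μ]
    _ = μ + x^2/(2*μ) := Real.sqrt_sq (by positivity)

lemma disp_sq (μ k : ℝ) (hμ : 0 < μ) : (disp μ k)^2 = k^2 * (μ + k^2/4) := by
  rw [disp, Real.sq_sqrt (by positivity)]; ring

lemma disp_pos (μ k : ℝ) (hμ : 0 < μ) (hk : 0 < k) : 0 < disp μ k := by
  rw [disp]; apply Real.sqrt_pos.mpr; positivity

lemma uu_pos (μ x : ℝ) (hμ : 0 < μ) : 0 < uu μ x := by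
  have := En_nonneg μ x; rw [uu]; linarith

lemma En_pos (μ x : ℝ) (hμ : 0 < μ) : 0 < En μ x :=
  lt_of_lt_of_le hμ (mu_le_En μ x hμ.le)

lemma sig_eq (μ k : ℝ) (hμ : 0 < μ) (hd : 0 < disp μ k) :
    sig μ k = (uu μ (disp μ k) + disp μ k)
      / (2 * Real.sqrt (disp μ k * uu μ (disp μ k))) := by
  set d := disp μ k with hdd
  have hE2 : (En μ d)^2 = d^2 + μ^2 := En_sq μ d
  have hEn : 0 ≤ En μ d := En_nonneg μ d
  have hu : 0 < uu μ d := by rw [uu]; linarith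
  have hq2 : Real.sqrt (d * uu μ d) ^ 2 = d * uu μ d := Real.sq_sqrt (by positivity)
  have hqpos : 0 < Real.sqrt (d * uu μ d) := Real.sqrt_pos.mpr (by positivity)
  have key : (Real.sqrt (d^2 + μ^2) + d) / (2 * d)
      = ((uu μ d + d) / (2 * Real.sqrt (d * uu μ d)))^2 := by
    rw [div_pow, mul_pow, hq2, show Real.sqrt (d^2+μ^2) = En μ d from rfl]
    rw [div_eq_div_iff (by positivity) (by positivity)]
    rw [uu]
    linear_combination (2*d) * hE2
  rw [sig, ← hdd, key, Real.sqrt_sq (by positivity)]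

lemma gam_eq (μ k : ℝ) (hμ : 0 < μ) (hd : 0 < disp μ k) :
    gam μ k = (uu μ (disp μ k) - disp μ k)
      / (2 * Real.sqrt (disp μ k * uu μ (disp μ k))) := by
  set d := disp μ k with hdd
  have hE2 : (En μ d)^2 = d^2 + μ^2 := En_sq μ d
  have hEn : 0 ≤ En μ d := En_nonneg μ d
  have hdE : d ≤ En μ d := x_le_En μ d hd.le
  have hu : 0 < uu μ d := by rw [uu]; linarith
  have hq2 : Real.sqrt (d * uu μ d) ^ 2 = d * uu μ d := Real.sq_sqrt (by positivity)
  have hqpos : 0 < Real.sqrt (d * uu μ d) := Real.sqrt_pos.mpr (by positivity)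
  have hnum : 0 ≤ uu μ d - d := by rw [uu]; linarith
  have key : (Real.sqrt (d^2 + μ^2) - d) / (2 * d)
      = ((uu μ d - d) / (2 * Real.sqrt (d * uu μ d)))^2 := by
    rw [div_pow, mul_pow, hq2, show Real.sqrt (d^2+μ^2) = En μ d from rfl]
    rw [div_eq_div_iff (by positivity) (by positivity)]
    rw [uu]
    linear_combination (2*d) * hE2
  rw [gam, ← hdd, key, Real.sqrt_sq (by positivity)]

lemma disp_pp (μ k y : ℝ) (hμ : 0 < μ) (h : 0 ≤ (disp μ k + y)/2) :
    disp μ (pp μ k y) = (disp μ k + y)/2 := by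
  set ε := (disp μ k + y)/2 with hε
  have hE2 : (En μ ε)^2 = ε^2 + μ^2 := En_sq μ ε
  have hEμ : μ ≤ En μ ε := mu_le_En μ ε hμ.le
  have hp2 : (pp μ k y)^2 = 2 * (En μ ε - μ) := by
    rw [pp, ← hε, show Real.sqrt (ε^2+μ^2) = En μ ε from rfl]
    exact Real.sq_sqrt (by linarith)
  rw [disp, show (pp μ k y)^4/4 + μ*(pp μ k y)^2 = ε^2 from by
    linear_combination (((pp μ k y)^2 + 2*(En μ ε - μ))/4 + μ) * hp2 + hE2]
  exact Real.sqrt_sq h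

lemma disp_ll (μ k y : ℝ) (hμ : 0 < μ) (h : 0 ≤ (disp μ k - y)/2) :
    disp μ (ll μ k y) = (disp μ k - y)/2 := by
  set ε := (disp μ k - y)/2 with hε
  have hE2 : (En μ ε)^2 = ε^2 + μ^2 := En_sq μ ε
  have hEμ : μ ≤ En μ ε := mu_le_En μ ε hμ.le
  have hp2 : (ll μ k y)^2 = 2 * (En μ ε - μ) := by
    rw [ll, ← hε, show Real.sqrt (ε^2+μ^2) = En μ ε from rfl]
    exact Real.sq_sqrt (by linarith)
  rw [disp, show (ll μ k y)^4/4 + μ*(ll μ k y)^2 = ε^2 from by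
    linear_combination (((ll μ k y)^2 + 2*(En μ ε - μ))/4 + μ) * hp2 + hE2]
  exact Real.sqrt_sq h

lemma A1_eq (μ x y : ℝ) : A1 μ x y = 2 * En μ ((x+y)/2) := by
  rw [A1, En, show (x+y)^2 + 4*μ^2 = 4 * (((x+y)/2)^2 + μ^2) by ring,
    show (4:ℝ) = 2^2 by norm_num, Real.sqrt_mul (by positivity), Real.sqrt_sq (by norm_num)]

lemma A2_eq (μ x y : ℝ) : A2 μ x y = 2 * En μ ((x-y)/2) := by
  rw [A2, En, show (x-y)^2 + 4*μ^2 = 4 * (((x-y)/2)^2 + μ^2) by ring,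
    show (4:ℝ) = 2^2 by norm_num, Real.sqrt_mul (by positivity), Real.sqrt_sq (by norm_num)]

lemma hcub_core (s T uk up ul ek ep el qk qp ql : ℝ)
    (hqk : qk ≠ 0) (hqp : qp ≠ 0) (hql : ql ≠ 0)
    (hT : T = el*(uk*up) + ep*(uk*ul) - ek*(up*ul) + 3*(ek*(ep*el))) :
    2 * s * ((up+ep)/(2*qp) * ((uk-ek)/(2*qk)) * ((ul-el)/(2*ql))
      + (ul+el)/(2*ql) * ((uk-ek)/(2*qk)) * ((up-ep)/(2*qp))
      + (up+ep)/(2*qp) * ((ul+el)/(2*ql)) * ((uk+ek)/(2*qk))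
      - (up-ep)/(2*qp) * ((uk+ek)/(2*qk)) * ((ul+el)/(2*ql))
      - (ul-el)/(2*ql) * ((uk+ek)/(2*qk)) * ((up+ep)/(2*qp))
      - (up-ep)/(2*qp) * ((ul-el)/(2*ql)) * ((uk-ek)/(2*qk)))
    = s * T / (2*(qk*(qp*ql))) := by
  subst hT; field_simp; ring

lemma F_core (m v s T ek ep el Ep El uk up ul qk qp ql X : ℝ)
    (hqk2 : qk^2 = ek*uk) (hqp2 : qp^2 = ep*up) (hql2 : ql^2 = el*ul)
    (hs2 : s^2 = m*v) (hX : X = 4*(ep*el))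
    (hek : ek ≠ 0) (hep : ep ≠ 0) (hel : el ≠ 0) (hEp : Ep ≠ 0) (hEl : El ≠ 0)
    (huk : uk ≠ 0) (hup : up ≠ 0) (hul : ul ≠ 0)
    (hqk : qk ≠ 0) (hqp : qp ≠ 0) (hql : ql ≠ 0) :
    (s * T / (2*(qk*(qp*ql))))^2 * X / (2*Ep * (2*El))
      = m*v*T^2/(4*ek*(uk*up*ul*Ep*El)) := by
  subst hX
  rw [div_pow, mul_pow, mul_pow, mul_pow, mul_pow, hs2, hqk2, hqp2, hql2]
  field_simp
  ring

lemma F_eq (μ v₀ k y : ℝ) (hμ : 0 < μ) (hv : 0 < v₀) (hk : 0 < disp μ k)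
    (hy1 : -(disp μ k) < y) (hy2 : y < disp μ k) :
    (hcub μ v₀ k (pp μ k y) (ll μ k y))^2 * ((disp μ k)^2 - y^2)
      / (A1 μ (disp μ k) y * A2 μ (disp μ k) y) = Fn μ v₀ (disp μ k) y := by
  set e := disp μ k with hed
  have hεp : 0 < (e + y)/2 := by linarith
  have hεl : 0 < (e - y)/2 := by linarith
  have hdp : disp μ (pp μ k y) = (e + y)/2 := disp_pp μ k y hμ hεp.le
  have hdl : disp μ (ll μ k y) = (e - y)/2 := disp_ll μ k y hμ hεl.le
  have sigk := sig_eq μ k hμ hk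
  have gamk := gam_eq μ k hμ hk
  have sigp := sig_eq μ (pp μ k y) hμ (by rw [hdp]; exact hεp)
  have gamp := gam_eq μ (pp μ k y) hμ (by rw [hdp]; exact hεp)
  have sigl := sig_eq μ (ll μ k y) hμ (by rw [hdl]; exact hεl)
  have gaml := gam_eq μ (ll μ k y) hμ (by rw [hdl]; exact hεl)
  rw [← hed] at sigk gamk
  rw [hdp] at sigp gamp
  rw [hdl] at sigl gaml
  have huk : 0 < uu μ e := uu_pos μ e hμ
  have hup : 0 < uu μ ((e+y)/2) := uu_pos μ _ hμ
  have hul : 0 < uu μ ((e-y)/2) := uu_pos μ _ hμ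
  have hEp : 0 < En μ ((e+y)/2) := En_pos μ _ hμ
  have hEl : 0 < En μ ((e-y)/2) := En_pos μ _ hμ
  have hqk : 0 < Real.sqrt (e * uu μ e) := Real.sqrt_pos.mpr (mul_pos hk huk)
  have hqp : 0 < Real.sqrt ((e+y)/2 * uu μ ((e+y)/2)) :=
    Real.sqrt_pos.mpr (mul_pos hεp hup)
  have hql : 0 < Real.sqrt ((e-y)/2 * uu μ ((e-y)/2)) :=
    Real.sqrt_pos.mpr (mul_pos hεl hul)
  have hqk2 : Real.sqrt (e * uu μ e)^2 = e * uu μ e :=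
    Real.sq_sqrt (mul_pos hk huk).le
  have hqp2 : Real.sqrt ((e+y)/2 * uu μ ((e+y)/2))^2 = (e+y)/2 * uu μ ((e+y)/2) :=
    Real.sq_sqrt (mul_pos hεp hup).le
  have hql2 : Real.sqrt ((e-y)/2 * uu μ ((e-y)/2))^2 = (e-y)/2 * uu μ ((e-y)/2) :=
    Real.sq_sqrt (mul_pos hεl hul).le
  have hsq : Real.sqrt (μ * v₀)^2 = μ * v₀ := Real.sq_sqrt (by positivity)
  have hH := hcub_core (Real.sqrt (μ*v₀)) (Tf μ e y)
      (uu μ e) (uu μ ((e+y)/2)) (uu μ ((e-y)/2)) e ((e+y)/2) ((e-y)/2)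
      (Real.sqrt (e * uu μ e)) (Real.sqrt ((e+y)/2 * uu μ ((e+y)/2)))
      (Real.sqrt ((e-y)/2 * uu μ ((e-y)/2)))
      hqk.ne' hqp.ne' hql.ne' (by rw [Tf]; ring)
  rw [hcub, sigk, gamk, sigp, gamp, sigl, gaml, hH, A1_eq, A2_eq, Fn]
  exact F_core μ v₀ (Real.sqrt (μ*v₀)) (Tf μ e y) e ((e+y)/2) ((e-y)/2)
    (En μ ((e+y)/2)) (En μ ((e-y)/2)) (uu μ e) (uu μ ((e+y)/2)) (uu μ ((e-y)/2))
    (Real.sqrt (e * uu μ e)) (Real.sqrt ((e+y)/2 * uu μ ((e+y)/2)))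
    (Real.sqrt ((e-y)/2 * uu μ ((e-y)/2))) (e^2 - y^2)
    hqk2 hqp2 hql2 hsq (by ring)
    hk.ne' hεp.ne' hεl.ne' hEp.ne' hEl.ne' huk.ne' hup.ne' hul.ne'
    hqk.ne' hqp.ne' hql.ne'

private lemma mini1 (m e : ℝ) (hm : 0 < m) (he : 0 < e) (hee : e ≤ m/2) :
    e^2/(2*m) ≤ e/4 := by
  rw [div_le_iff₀ (by positivity)]; nlinarith

private lemma mini2 (m e : ℝ) (hm : 0 < m) (he : 0 < e) (hee : e ≤ m/2) :
    e^2/(2*m) ≤ m/8 := by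
  rw [div_le_iff₀ (by positivity)]; nlinarith

private lemma mini3 (m : ℝ) (hm : 0 ≤ m) :
    ((17/8)*m)*((17/8)*m)*((9/8)*m)*((9/8)*m) ≤ 6*m^4 := by
  nlinarith [pow_nonneg hm 4]

private lemma mini4 (m : ℝ) (hm : 0 ≤ m) :
    ((17/8)*m)*((9/8)*m)*((9/8)*m) ≤ 3*m^3 := by
  nlinarith [pow_nonneg hm 3]

private lemma mini5 (m : ℝ) (hm : 0 ≤ m) : ((9/8)*m)*((9/8)*m) ≤ 2*m^2 := by
  nlinarith [sq_nonneg m]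

private lemma mini6 (ep el e : ℝ) (hsum : ep + el = e) : ep*el ≤ e^2/4 := by
  subst hsum; nlinarith [sq_nonneg (ep - el)]

private lemma mini7 (m e : ℝ) (hm : 0 < m) (he : 0 < e) (hee : e ≤ m/2) :
    (e^4/(2*m))^2 ≤ e^7/(8*m) := by
  rw [div_pow, div_le_div_iff₀ (by positivity) (by positivity)]
  calc (e^4)^2 * (8*m) = (2*e) * (4 * e^7 * m) := by ring
  _ ≤ m * (4 * e^7 * m) := by
      apply mul_le_mul_of_nonneg_right (by linarith) (by positivity)
  _ = e^7 * (2*m)^2 := by ring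

set_option maxHeartbeats 1600000 in
lemma Fbound_core (m v e ep el Ek Ep El : ℝ)
    (hm : 0 < m) (hv : 0 < v) (he : 0 < e) (hee : e ≤ m/2)
    (hp0 : 0 ≤ ep) (hl0 : 0 ≤ el) (hsum : ep + el = e)
    (hEk2 : Ek^2 = e^2 + m^2) (hEp2 : Ep^2 = ep^2 + m^2) (hEl2 : El^2 = el^2 + m^2)
    (hEk1 : m ≤ Ek) (hEkB : Ek ≤ m + e^2/(2*m))
    (hEp1 : m ≤ Ep) (hEpB : Ep ≤ m + ep^2/(2*m))
    (hEl1 : m ≤ El) (hElB : El ≤ m + el^2/(2*m)) :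
    |m*v*(el * (Ek+m) * (Ep+m) + ep * (Ek+m) * (El+m) - e * (Ep+m) * (El+m)
        + 3*e*ep*el)^2
        / (4*e*((Ek+m)*(Ep+m)*(El+m)*Ep*El)) - 9*v/(8*m^4)*e*ep^2*el^2|
      ≤ v*e^6/m^5 := by
  have hep_le : ep ≤ e := by linarith
  have hel_le : el ≤ e := by linarith
  have hrk0 : 0 ≤ Ek - m := by linarith
  have hrp0 : 0 ≤ Ep - m := by linarith
  have hrl0 : 0 ≤ El - m := by linarith
  have hEkp : 0 < Ek := hm.trans_le hEk1
  have hEpp : 0 < Ep := hm.trans_le hEp1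
  have hElp : 0 < El := hm.trans_le hEl1
  have hukp : 0 < Ek + m := by linarith
  have hupp : 0 < Ep + m := by linarith
  have hulp : 0 < El + m := by linarith
  have heB : e^2/(2*m) ≤ e/4 := mini1 m e hm he hee
  have heB2 : e^2/(2*m) ≤ m/8 := mini2 m e hm he hee
  have hrkB : Ek - m ≤ e^2/(2*m) := by linarith
  have hrpB : Ep - m ≤ e^2/(2*m) := by
    have h1 : ep^2/(2*m) ≤ e^2/(2*m) := by gcongr
    linarith
  have hrlB : El - m ≤ e^2/(2*m) := by
    have h1 : el^2/(2*m) ≤ e^2/(2*m) := by gcongr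
    linarith
  have hrk4 : Ek - m ≤ e/4 := le_trans hrkB heB
  have hrp4 : Ep - m ≤ e/4 := le_trans hrpB heB
  have hrl4 : El - m ≤ e/4 := le_trans hrlB heB
  have hrk8 : Ek - m ≤ m/8 := le_trans hrkB heB2
  have hrp8 : Ep - m ≤ m/8 := le_trans hrpB heB2
  have hrl8 : El - m ≤ m/8 := le_trans hrlB heB2
  obtain ⟨D, hDdef⟩ : ∃ D', D' = (Ek+m)*(Ep+m)*(El+m)*Ep*El := ⟨_, rfl⟩
  obtain ⟨T, hTdef⟩ : ∃ T', T' = el * (Ek+m) * (Ep+m) + ep * (Ek+m) * (El+m)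
      - e * (Ep+m) * (El+m) + 3*e*ep*el := ⟨_, rfl⟩
  rw [← hDdef, ← hTdef]
  have hDlo : 8*m^5 ≤ D := by
    rw [hDdef]
    calc 8*m^5 = (2*m)*(2*m)*(2*m)*m*m := by ring
    _ ≤ (Ek+m)*(Ep+m)*(El+m)*Ep*El := by gcongr <;> linarith
  have hDpos : 0 < D := lt_of_lt_of_le (by positivity) hDlo
  have hprod4 : (Ep+m)*(El+m)*Ep*El ≤ 6*m^4 :=
    le_trans (by gcongr <;> linarith) (mini3 m hm.le)
  have hprod3 : (El+m)*Ep*El ≤ 3*m^3 :=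
    le_trans (by gcongr <;> linarith) (mini4 m hm.le)
  have hprod2 : Ep*El ≤ 2*m^2 :=
    le_trans (by gcongr <;> linarith) (mini5 m hm.le)
  have hdec : D - 8*m^5 = (Ek-m)*((Ep+m)*(El+m)*Ep*El)
      + (2*m)*((Ep-m)*((El+m)*Ep*El)) + (4*m^2)*((El-m)*(Ep*El))
      + (8*m^3)*((Ep-m)*El) + (8*m^4)*(El-m) := by rw [hDdef]; ring
  have t1 : (Ek-m)*((Ep+m)*(El+m)*Ep*El) ≤ (e/4)*(6*m^4) :=
    mul_le_mul hrk4 hprod4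
      (mul_nonneg (mul_nonneg (mul_nonneg hupp.le hulp.le) hEpp.le) hElp.le)
      (by positivity)
  have t2 : (Ep-m)*((El+m)*Ep*El) ≤ (e/4)*(3*m^3) :=
    mul_le_mul hrp4 hprod3
      (mul_nonneg (mul_nonneg hulp.le hEpp.le) hElp.le) (by positivity)
  have t3 : (El-m)*(Ep*El) ≤ (e/4)*(2*m^2) :=
    mul_le_mul hrl4 hprod2 (mul_nonneg hEpp.le hElp.le) (by positivity)
  have t4 : (Ep-m)*El ≤ (e/4)*(2*m) :=
    mul_le_mul hrp4 (by linarith) hElp.le (by positivity)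
  have hDd : D - 8*m^5 ≤ 18*m^4*e := by
    have t2' : (2*m)*((Ep-m)*((El+m)*Ep*El)) ≤ (2*m)*((e/4)*(3*m^3)) :=
      mul_le_mul_of_nonneg_left t2 (by positivity)
    have t3' : (4*m^2)*((El-m)*(Ep*El)) ≤ (4*m^2)*((e/4)*(2*m^2)) :=
      mul_le_mul_of_nonneg_left t3 (by positivity)
    have t4' : (8*m^3)*((Ep-m)*El) ≤ (8*m^3)*((e/4)*(2*m)) :=
      mul_le_mul_of_nonneg_left t4 (by positivity)
    have t5' : (8*m^4)*(El-m) ≤ (8*m^4)*(e/4) :=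
      mul_le_mul_of_nonneg_left hrl4 (by positivity)
    have hsumup : (e/4)*(6*m^4) + (2*m)*((e/4)*(3*m^3)) + (4*m^2)*((e/4)*(2*m^2))
        + (8*m^3)*((e/4)*(2*m)) + (8*m^4)*(e/4) = 11*(m^4*e) := by ring
    have hme : 0 ≤ m^4*e := by positivity
    linarith
  -- Delta identity and bound
  have hrelk : (Ek - m)*(Ek + m) = e^2 := by linear_combination hEk2
  have hrelp : (Ep - m)*(Ep + m) = ep^2 := by linear_combination hEp2
  have hrell : (El - m)*(El + m) = el^2 := by linear_combination hEl2
  have hDel : T - 6*e*(ep*el)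
      = (el*((Ek-m)*(Ep-m)) + ep*((Ek-m)*(El-m)) - e*((Ep-m)*(El-m)))
        - (e*(Ek-m)^2 - ep*(Ep-m)^2 - el*(El-m)^2) := by
    rw [hTdef]
    linear_combination e*hrelk - ep*hrelp - el*hrell
      + (4*m^2 + 2*m*((Ek-m)+(Ep-m)+(El-m)) - e^2 - e*ep - e*el
          - ep^2 + ep*el - el^2) * hsum
  have c1 : (Ek-m)*(Ep-m) ≤ (e/4)*(e^2/(2*m)) :=
    mul_le_mul hrk4 hrpB hrp0 (by positivity)
  have c2 : (Ek-m)*(El-m) ≤ (e/4)*(e^2/(2*m)) :=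
    mul_le_mul hrk4 hrlB hrl0 (by positivity)
  have c3 : (Ep-m)*(El-m) ≤ (e/4)*(e^2/(2*m)) :=
    mul_le_mul hrp4 hrlB hrl0 (by positivity)
  have c4 : (Ek-m)*(Ek-m) ≤ (e/4)*(e^2/(2*m)) :=
    mul_le_mul hrk4 hrkB hrk0 (by positivity)
  have c5 : (Ep-m)*(Ep-m) ≤ (e/4)*(e^2/(2*m)) :=
    mul_le_mul hrp4 hrpB hrp0 (by positivity)
  have c6 : (El-m)*(El-m) ≤ (e/4)*(e^2/(2*m)) :=
    mul_le_mul hrl4 hrlB hrl0 (by positivity)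
  have w1 : el*((Ek-m)*(Ep-m)) ≤ e*((e/4)*(e^2/(2*m))) :=
    mul_le_mul hel_le c1 (mul_nonneg hrk0 hrp0) he.le
  have w2 : ep*((Ek-m)*(El-m)) ≤ e*((e/4)*(e^2/(2*m))) :=
    mul_le_mul hep_le c2 (mul_nonneg hrk0 hrl0) he.le
  have w3 : e*((Ep-m)*(El-m)) ≤ e*((e/4)*(e^2/(2*m))) :=
    mul_le_mul_of_nonneg_left c3 he.le
  have w4 : e*((Ek-m)*(Ek-m)) ≤ e*((e/4)*(e^2/(2*m))) :=
    mul_le_mul_of_nonneg_left c4 he.le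
  have w5 : ep*((Ep-m)*(Ep-m)) ≤ e*((e/4)*(e^2/(2*m))) :=
    mul_le_mul hep_le c5 (mul_nonneg hrp0 hrp0) he.le
  have w6 : el*((El-m)*(El-m)) ≤ e*((e/4)*(e^2/(2*m))) :=
    mul_le_mul hel_le c6 (mul_nonneg hrl0 hrl0) he.le
  have hnn1 : 0 ≤ el*((Ek-m)*(Ep-m)) := mul_nonneg hl0 (mul_nonneg hrk0 hrp0)
  have hnn2 : 0 ≤ ep*((Ek-m)*(El-m)) := mul_nonneg hp0 (mul_nonneg hrk0 hrl0)
  have hnn3 : 0 ≤ e*((Ep-m)*(El-m)) := mul_nonneg he.le (mul_nonneg hrp0 hrl0)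
  have hnn4 : 0 ≤ e*((Ek-m)*(Ek-m)) := mul_nonneg he.le (mul_nonneg hrk0 hrk0)
  have hnn5 : 0 ≤ ep*((Ep-m)*(Ep-m)) := mul_nonneg hp0 (mul_nonneg hrp0 hrp0)
  have hnn6 : 0 ≤ el*((El-m)*(El-m)) := mul_nonneg hl0 (mul_nonneg hrl0 hrl0)
  have hemB : e*((e/4)*(e^2/(2*m))) = e^4/(8*m) := by field_simp; ring
  have h48 : 4 * (e^4/(8*m)) = e^4/(2*m) := by ring
  have hΔub : T - 6*e*(ep*el) ≤ e^4/(2*m) := by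
    rw [hDel]
    have e1 : e*(Ek-m)^2 = e*((Ek-m)*(Ek-m)) := by ring
    have e2 : ep*(Ep-m)^2 = ep*((Ep-m)*(Ep-m)) := by ring
    have e3 : el*(El-m)^2 = el*((El-m)*(El-m)) := by ring
    rw [e1, e2, e3]; linarith
  have hΔlb : -(e^4/(2*m)) ≤ T - 6*e*(ep*el) := by
    rw [hDel]
    have e1 : e*(Ek-m)^2 = e*((Ek-m)*(Ek-m)) := by ring
    have e2 : ep*(Ep-m)^2 = ep*((Ep-m)*(Ep-m)) := by ring
    have e3 : el*(El-m)^2 = el*((El-m)*(El-m)) := by ring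
    rw [e1, e2, e3]; linarith
  have habsΔ : |T - 6*e*(ep*el)| ≤ e^4/(2*m) := abs_le.mpr ⟨hΔlb, hΔub⟩
  -- split into the two pieces
  have hD0 : D ≠ 0 := ne_of_gt hDpos
  have hsplit : m*v*T^2/(4*e*D) - 9*v/(8*m^4)*e*ep^2*el^2
      = 9*v*e*(ep^2*el^2)*(8*m^5 - D)/(8*m^4*D)
        + m*v*(12*e*(ep*el)*(T - 6*e*(ep*el)) + (T - 6*e*(ep*el))^2)/(4*e*D) := by
    field_simp
    ring
  rw [hsplit]
  clear hsplit hdec hDel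
  have hepel : ep*el ≤ e^2/4 := mini6 ep el e hsum
  have hepel2 : ep^2*el^2 ≤ e^4/16 := by
    have h0 : 0 ≤ ep*el := mul_nonneg hp0 hl0
    calc ep^2*el^2 = (ep*el)^2 := by ring
    _ ≤ (e^2/4)^2 := pow_le_pow_left₀ h0 hepel 2
    _ = e^4/16 := by ring
  have habs8D : |8*m^5 - D| ≤ 18*m^4*e := by
    rw [abs_le]
    constructor
    · linarith
    · have : 0 ≤ 18*m^4*e := by positivity
      linarith
  -- piece 1
  have hN1 : |9*v*e*(ep^2*el^2)*(8*m^5 - D)| ≤ (81/8)*(v*(m^4*e^6)) := by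
    rw [abs_mul]
    have h1 : |9*v*e*(ep^2*el^2)| = 9*v*e*(ep^2*el^2) := abs_of_nonneg (by positivity)
    rw [h1]
    calc 9*v*e*(ep^2*el^2) * |8*m^5 - D| ≤ (9*v*e*(e^4/16)) * (18*m^4*e) := by
          apply mul_le_mul _ habs8D (abs_nonneg _) (by positivity)
          apply mul_le_mul_of_nonneg_left hepel2 (by positivity)
    _ = (81/8)*(v*(m^4*e^6)) := by ring
  have hp1 : |9*v*e*(ep^2*el^2)*(8*m^5 - D)/(8*m^4*D)| ≤ (81/512)*(v*e^6/m^5) := by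
    rw [abs_div, abs_of_pos (by positivity : (0:ℝ) < 8*m^4*D)]
    calc |9*v*e*(ep^2*el^2)*(8*m^5 - D)| / (8*m^4*D)
        ≤ ((81/8)*(v*(m^4*e^6))) / (8*m^4*(8*m^5)) := by
          apply div_le_div₀ (by positivity) hN1 (by positivity)
          have := mul_le_mul_of_nonneg_left hDlo (by positivity : (0:ℝ) ≤ 8*m^4)
          linarith
    _ = (81/512)*(v*e^6/m^5) := by field_simp; ring
  -- piece 2
  have h12 : 12*e*(ep*el) ≤ 3*e^3 := by
    calc 12*e*(ep*el) ≤ 12*e*(e^2/4) :=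
          mul_le_mul_of_nonneg_left hepel (by positivity)
    _ = 3*e^3 := by ring
  have habs12 : |12*e*(ep*el)*(T - 6*e*(ep*el))| ≤ 3*e^3*(e^4/(2*m)) := by
    rw [abs_mul]
    apply mul_le_mul _ habsΔ (abs_nonneg _) (by positivity)
    rw [abs_of_nonneg (by positivity : (0:ℝ) ≤ 12*e*(ep*el))]
    exact h12
  have hΔsq : (T - 6*e*(ep*el))^2 ≤ e^7/(8*m) := by
    have h1 : (T - 6*e*(ep*el))^2 ≤ (e^4/(2*m))^2 := sq_le_sq' hΔlb hΔub
    exact le_trans h1 (mini7 m e hm he hee)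
  have hN2 : |m*v*(12*e*(ep*el)*(T - 6*e*(ep*el)) + (T - 6*e*(ep*el))^2)|
      ≤ m*v*((13/8)*(e^7/m)) := by
    rw [abs_mul, abs_of_nonneg (by positivity : (0:ℝ) ≤ m*v)]
    apply mul_le_mul_of_nonneg_left _ (by positivity : (0:ℝ) ≤ m*v)
    calc |12*e*(ep*el)*(T - 6*e*(ep*el)) + (T - 6*e*(ep*el))^2|
        ≤ |12*e*(ep*el)*(T - 6*e*(ep*el))| + |(T - 6*e*(ep*el))^2| := abs_add_le _ _
    _ ≤ 3*e^3*(e^4/(2*m)) + e^7/(8*m) := by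
        have habsq : |(T - 6*e*(ep*el))^2| = (T - 6*e*(ep*el))^2 :=
          abs_of_nonneg (sq_nonneg _)
        rw [habsq]
        exact add_le_add habs12 hΔsq
    _ = (13/8)*(e^7/m) := by field_simp; ring
  have hp2 : |m*v*(12*e*(ep*el)*(T - 6*e*(ep*el)) + (T - 6*e*(ep*el))^2)/(4*e*D)|
      ≤ (13/256)*(v*e^6/m^5) := by
    rw [abs_div, abs_of_pos (by positivity : (0:ℝ) < 4*e*D)]
    calc |m*v*(12*e*(ep*el)*(T - 6*e*(ep*el)) + (T - 6*e*(ep*el))^2)| / (4*e*D)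
        ≤ (m*v*((13/8)*(e^7/m))) / (4*e*(8*m^5)) := by
          apply div_le_div₀ (by positivity) hN2 (by positivity)
          have := mul_le_mul_of_nonneg_left hDlo (by positivity : (0:ℝ) ≤ 4*e)
          linarith
    _ = (13/256)*(v*e^6/m^5) := by field_simp; ring
  calc |9*v*e*(ep^2*el^2)*(8*m^5 - D)/(8*m^4*D)
        + m*v*(12*e*(ep*el)*(T - 6*e*(ep*el)) + (T - 6*e*(ep*el))^2)/(4*e*D)|
      ≤ |9*v*e*(ep^2*el^2)*(8*m^5 - D)/(8*m^4*D)|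
        + |m*v*(12*e*(ep*el)*(T - 6*e*(ep*el)) + (T - 6*e*(ep*el))^2)/(4*e*D)| :=
        abs_add_le _ _
  _ ≤ (81/512)*(v*e^6/m^5) + (13/256)*(v*e^6/m^5) := add_le_add hp1 hp2
  _ ≤ v*e^6/m^5 := by
      have : 0 ≤ v*e^6/m^5 := by positivity
      linarith


lemma F_bound (μ v₀ e y : ℝ) (hμ : 0 < μ) (hv : 0 < v₀) (he : 0 < e)
    (hee : e ≤ μ/2) (hy1 : -e ≤ y) (hy2 : y ≤ e) :
    |Fn μ v₀ e y - 9*v₀/(8*μ^4) * e * ((e+y)/2)^2 * ((e-y)/2)^2|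
      ≤ v₀ * e^6 / μ^5 := by
  have h := Fbound_core μ v₀ e ((e+y)/2) ((e-y)/2) (En μ e) (En μ ((e+y)/2))
    (En μ ((e-y)/2)) hμ hv he hee (by linarith) (by linarith) (by ring)
    (En_sq μ e) (En_sq μ ((e+y)/2)) (En_sq μ ((e-y)/2))
    (mu_le_En μ e hμ.le) (En_le μ e hμ)
    (mu_le_En μ ((e+y)/2) hμ.le) (En_le μ ((e+y)/2) hμ)
    (mu_le_En μ ((e-y)/2) hμ.le) (En_le μ ((e-y)/2) hμ)
  simp only [Fn, Tf, uu]
  exact h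

lemma En_cont (μ : ℝ) (f : ℝ → ℝ) (hf : Continuous f) :
    Continuous (fun y => En μ (f y)) := by
  simp only [En]
  exact (Continuous.add (hf.pow 2) continuous_const).sqrt

lemma uu_cont (μ : ℝ) (f : ℝ → ℝ) (hf : Continuous f) :
    Continuous (fun y => uu μ (f y)) := by
  simp only [uu]
  exact (En_cont μ f hf).add continuous_const

lemma Fn_cont (μ v₀ e : ℝ) (hμ : 0 < μ) (he : 0 < e) :
    Continuous (fun y => Fn μ v₀ e y) := by
  have hp : Continuous (fun y : ℝ => (e+y)/2) := by continuity
  have hl : Continuous (fun y : ℝ => (e-y)/2) := by continuity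
  have hup : Continuous (fun y => uu μ ((e+y)/2)) := uu_cont μ _ hp
  have hul : Continuous (fun y => uu μ ((e-y)/2)) := uu_cont μ _ hl
  have hEp : Continuous (fun y => En μ ((e+y)/2)) := En_cont μ _ hp
  have hEl : Continuous (fun y => En μ ((e-y)/2)) := En_cont μ _ hl
  have hT : Continuous (fun y => Tf μ e y) := by
    simp only [Tf]
    fun_prop
  simp only [Fn]
  apply Continuous.div
  · fun_prop
  · fun_prop
  · intro y
    have h1 := uu_pos μ e hμ
    have h2 := uu_pos μ ((e+y)/2) hμ
    have h3 := uu_pos μ ((e-y)/2) hμ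
    have h4 := En_pos μ ((e+y)/2) hμ
    have h5 := En_pos μ ((e-y)/2) hμ
    positivity


open intervalIntegral in
lemma P_integral (μ v₀ e : ℝ) (hμ : 0 < μ) (he : 0 < e) :
    ∫ y in (-e)..e, 9*v₀/(8*μ^4) * e * ((e+y)/2)^2 * ((e-y)/2)^2
      = 3*v₀*e^6/(40*μ^4) := by
  have hre : ∀ y : ℝ, 9*v₀/(8*μ^4) * e * ((e+y)/2)^2 * ((e-y)/2)^2
      = (9*v₀*e/(128*μ^4)) * (e^4 - 2*e^2*y^2 + y^4) := by
    intro y; field_simp; ring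
  rw [intervalIntegral.integral_congr (fun y _ => hre y)]
  rw [intervalIntegral.integral_const_mul]
  have i1 : IntervalIntegrable (fun _ : ℝ => e^4) volume (-e) e :=
    intervalIntegrable_const
  have i2 : IntervalIntegrable (fun y : ℝ => 2*e^2*y^2) volume (-e) e :=
    (Continuous.mul continuous_const (continuous_pow 2)).intervalIntegrable _ _
  have i3 : IntervalIntegrable (fun y : ℝ => y^4) volume (-e) e :=
    (continuous_pow 4).intervalIntegrable _ _
  rw [show (fun y : ℝ => e^4 - 2*e^2*y^2 + y^4)
      = (fun y : ℝ => (e^4 - 2*e^2*y^2) + y^4) from rfl] at *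
  rw [intervalIntegral.integral_add (i1.sub i2) i3,
    intervalIntegral.integral_sub i1 i2, intervalIntegral.integral_const,
    intervalIntegral.integral_const_mul, integral_pow, integral_pow]
  have h5 : ((-e:ℝ))^(2+1) = -e^3 := by ring
  have h6 : ((-e:ℝ))^(4+1) = -e^5 := by ring
  rw [h5, h6]
  field_simp
  ring

private lemma mini10a (m t : ℝ) (hm : 0 < m) (ht0 : 0 ≤ t) :
    0 ≤ (m+t)^3 - m^3 := by nlinarith [mul_nonneg ht0 ht0, mul_nonneg (mul_nonneg ht0 ht0) ht0, mul_nonneg hm.le ht0, mul_nonneg (mul_nonneg hm.le hm.le) ht0, mul_nonneg (mul_nonneg hm.le ht0) ht0]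

private lemma mini10b (m t : ℝ) (hm : 0 < m) (ht0 : 0 ≤ t) (ht : t ≤ 1) :
    (m+t)^3 - m^3 ≤ 3*(m+1)^2*t := by
  nlinarith [mul_nonneg ht0 ht0, mul_nonneg (mul_nonneg ht0 ht0) ht0,
    mul_nonneg hm.le ht0, mul_nonneg (mul_nonneg hm.le hm.le) ht0,
    mul_nonneg (mul_nonneg hm.le ht0) ht0, mul_nonneg (mul_nonneg ht0 ht0) hm.le]

private lemma mini11 (X k : ℝ) (hX : 0 ≤ X) (hk0 : 0 < k) (hk1 : k ≤ 1) :
    (9/160)*X*k ≤ X := by nlinarith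

private lemma mini12 (C k : ℝ) (hC : 0 ≤ C) (hk : 0 < k) :
    1*(C*k^7) ≤ C*k^6*(8*Real.pi*k) := by
  nlinarith [Real.pi_gt_three, mul_nonneg hC (pow_nonneg hk.le 7)]


lemma I_est (μ v₀ k : ℝ) (hμ : 0 < μ) (hv : 0 < v₀) (hk : 0 < k)
    (hee : disp μ k ≤ μ/2) :
    |I μ v₀ k - 3*v₀*(disp μ k)^6/(40*μ^4)| ≤ 2*v₀*(disp μ k)^7/μ^5 := by
  set e := disp μ k with hed
  have he : 0 < e := disp_pos μ k hμ hk
  have hI1 : I μ v₀ k = ∫ y in (-e)..e, Fn μ v₀ e y := by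
    rw [I, ← hed]
    apply intervalIntegral.integral_congr_ae
    have h0 : ∀ᵐ (x : ℝ) ∂volume, x ≠ e := by
      rw [MeasureTheory.ae_iff]
      have : {x : ℝ | ¬ x ≠ e} = {e} := by ext x; simp
      rw [this]
      exact measure_singleton e
    filter_upwards [h0] with x hx hmem
    rw [Set.uIoc_of_le (by linarith : -e ≤ e)] at hmem
    exact F_eq μ v₀ k x hμ hv he hmem.1 (lt_of_le_of_ne hmem.2 hx)
  have hcont := Fn_cont μ v₀ e hμ he
  have hPcont : Continuous (fun y : ℝ => 9*v₀/(8*μ^4) * e * ((e+y)/2)^2 * ((e-y)/2)^2) := by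
    continuity
  have hsub : (∫ y in (-e)..e, Fn μ v₀ e y)
      - (∫ y in (-e)..e, 9*v₀/(8*μ^4) * e * ((e+y)/2)^2 * ((e-y)/2)^2)
      = ∫ y in (-e)..e,
          (Fn μ v₀ e y - 9*v₀/(8*μ^4) * e * ((e+y)/2)^2 * ((e-y)/2)^2) :=
    (intervalIntegral.integral_sub (hcont.intervalIntegrable _ _)
      (hPcont.intervalIntegrable _ _)).symm
  have hbd : ‖∫ y in (-e)..e,
      (Fn μ v₀ e y - 9*v₀/(8*μ^4) * e * ((e+y)/2)^2 * ((e-y)/2)^2)‖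
      ≤ (v₀ * e^6 / μ^5) * |e - (-e)| := by
    apply intervalIntegral.norm_integral_le_of_norm_le_const
    intro x hx
    rw [Set.uIoc_of_le (by linarith : -e ≤ e)] at hx
    rw [Real.norm_eq_abs]
    exact F_bound μ v₀ e x hμ hv he hee (by linarith [hx.1]) hx.2
  rw [hI1, ← P_integral μ v₀ e hμ he]
  rw [show |e - (-e)| = 2*e from by rw [abs_of_pos (by linarith)]; ring] at hbd
  rw [hsub]
  calc |∫ y in (-e)..e, (Fn μ v₀ e y - 9*v₀/(8*μ^4) * e * ((e+y)/2)^2 * ((e-y)/2)^2)|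
      ≤ (v₀ * e^6 / μ^5) * (2*e) := hbd
  _ = 2*v₀*e^7/μ^5 := by ring

theorem stmt1 (μ v₀ : ℝ) (hμ : 0 < μ) (hv : 0 < v₀) :
    (fun k => ImSigma μ v₀ k + (3*v₀/(320*Real.pi*μ)) * k^5)
      =O[𝓝[>] (0:ℝ)] fun k => k^6 := by
  rw [isBigO_iff]
  refine ⟨2*v₀*(μ+1)^7/μ^5 + v₀*(μ+1)^2/μ^4, ?_⟩
  have hδ : (0:ℝ) < min 1 (μ/(2*(μ+1))) := by positivity
  filter_upwards [Ioc_mem_nhdsGT hδ] with k hk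
  obtain ⟨hk0, hkδ⟩ := hk
  have hk1 : k ≤ 1 := le_trans hkδ (min_le_left _ _)
  have hk2 : k ≤ μ/(2*(μ+1)) := le_trans hkδ (min_le_right _ _)
  set e := disp μ k with hed
  have he : 0 < e := disp_pos μ k hμ hk0
  have he2 : e^2 = k^2*(μ + k^2/4) := disp_sq μ k hμ
  have hk2' : k^2 ≤ 1 := by nlinarith
  have heK : e ≤ (μ+1)*k := by
    have hX : 0 < (μ+1)*k := by positivity
    have h1 : e^2 ≤ ((μ+1)*k)^2 := by nlinarith [sq_nonneg k, mul_nonneg (sq_nonneg k) hμ.le]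
    nlinarith [h1, he, hX]
  have hee : e ≤ μ/2 := by
    have h1 : (μ+1)*k ≤ (μ+1)*(μ/(2*(μ+1))) :=
      mul_le_mul_of_nonneg_left hk2 (by linarith)
    have h2 : (μ+1)*(μ/(2*(μ+1))) = μ/2 := by field_simp
    linarith
  have hIest := I_est μ v₀ k hμ hv hk0 hee
  have he6 : e^6 = k^6*(μ + k^2/4)^3 := by
    have h : e^6 = (e^2)^3 := by ring
    rw [h, he2]; ring
  have hediff : |3*v₀*e^6/(40*μ^4) - 3*v₀/(40*μ)*k^6| ≤ v₀*(μ+1)^2/μ^4 * k^7 := by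
    have hid : 3*v₀*e^6/(40*μ^4) - 3*v₀/(40*μ)*k^6
        = (3*v₀/(40*μ^4))*(k^6*((μ + k^2/4)^3 - μ^3)) := by
      rw [he6]; field_simp
    rw [hid]
    have h1 : 0 ≤ (μ + k^2/4)^3 - μ^3 := mini10a μ (k^2/4) hμ (by positivity)
    have h2 : (μ + k^2/4)^3 - μ^3 ≤ 3*(μ+1)^2*(k^2/4) := mini10b μ (k^2/4) hμ (by positivity) (by nlinarith)
    rw [abs_of_nonneg (mul_nonneg (by positivity)
      (mul_nonneg (by positivity) h1))]
    have h3 : k^6*((μ + k^2/4)^3 - μ^3) ≤ k^6*(3*(μ+1)^2*(k^2/4)) :=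
      mul_le_mul_of_nonneg_left h2 (by positivity)
    have h4 : (3*v₀/(40*μ^4))*(k^6*((μ + k^2/4)^3 - μ^3))
        ≤ (3*v₀/(40*μ^4))*(k^6*(3*(μ+1)^2*(k^2/4))) :=
      mul_le_mul_of_nonneg_left h3 (by positivity)
    have hre : (3*v₀/(40*μ^4))*(k^6*(3*(μ+1)^2*(k^2/4)))
        = (9/160)*(v₀*(μ+1)^2/μ^4*k^7)*k := by field_simp; ring
    have h5 := mini11 (v₀*(μ+1)^2/μ^4*k^7) k (by positivity) hk0 hk1
    have h6 : v₀*(μ+1)^2/μ^4*k^7 = v₀*(μ+1)^2/μ^4 * k^7 := by ring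
    linarith [hre ▸ h4]
  have h7 : e^7 ≤ ((μ+1)*k)^7 := pow_le_pow_left₀ he.le heK 7
  have h8 : 2*v₀*e^7/μ^5 ≤ 2*v₀*((μ+1)^7*k^7)/μ^5 := by
    have : ((μ+1)*k)^7 = (μ+1)^7*k^7 := mul_pow _ _ 7
    rw [← this]
    gcongr
  have htotal : |I μ v₀ k - 3*v₀/(40*μ)*k^6|
      ≤ (2*v₀*(μ+1)^7/μ^5 + v₀*(μ+1)^2/μ^4) * k^7 := by
    have htri := abs_sub_le (I μ v₀ k) (3*v₀*e^6/(40*μ^4)) (3*v₀/(40*μ)*k^6)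
    have : 2*v₀*((μ+1)^7*k^7)/μ^5 = 2*v₀*(μ+1)^7/μ^5 * k^7 := by ring
    rw [this] at h8
    have hcomb : (2*v₀*(μ+1)^7/μ^5 + v₀*(μ+1)^2/μ^4) * k^7
        = 2*v₀*(μ+1)^7/μ^5 * k^7 + v₀*(μ+1)^2/μ^4 * k^7 := by ring
    rw [hcomb]
    linarith
  have hπ : 0 < Real.pi := Real.pi_pos
  have hident : ImSigma μ v₀ k + 3*v₀/(320*Real.pi*μ)*k^5
      = -(1/(8*Real.pi*k)) * (I μ v₀ k - 3*v₀/(40*μ)*k^6) := by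
    rw [ImSigma]; field_simp; ring
  rw [Real.norm_eq_abs, Real.norm_eq_abs, hident, abs_mul, abs_neg,
    abs_of_pos (by positivity : (0:ℝ) < 1/(8*Real.pi*k)),
    abs_of_pos (by positivity : (0:ℝ) < k^6)]
  have hC0 : 0 ≤ 2*v₀*(μ+1)^7/μ^5 + v₀*(μ+1)^2/μ^4 := by positivity
  calc 1/(8*Real.pi*k) * |I μ v₀ k - 3*v₀/(40*μ)*k^6|
      ≤ 1/(8*Real.pi*k) * ((2*v₀*(μ+1)^7/μ^5 + v₀*(μ+1)^2/μ^4) * k^7) :=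
        mul_le_mul_of_nonneg_left htotal (by positivity)
  _ ≤ (2*v₀*(μ+1)^7/μ^5 + v₀*(μ+1)^2/μ^4) * k^6 := by
      rw [div_mul_eq_mul_div, div_le_iff₀ (by positivity)]
      exact mini12 _ k hC0 hk0
end

section
/- Let μ > 0. The function ℝ³ → ℝ given by k ↦ √(|k|⁴/4 + μ·|k|²) (the Bogoliubov dispersion relation for contact interaction, as a function of the momentum vector) is strictly convex and vanishes at k = 0. -/
open Real Set

private lemma gderiv (μ : ℝ) (hμ : 0 < μ) {t : ℝ} (ht : 0 < t) :
    HasDerivAt (fun t : ℝ => Real.sqrt (t^4/4 + μ * t^2))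
      ((t^3 + 2*μ*t) / (2 * Real.sqrt (t^4/4 + μ * t^2))) t := by
  have hq : 0 < t^4/4 + μ * t^2 := by nlinarith [pow_pos ht 4, pow_pos ht 2]
  have h1 : HasDerivAt (fun t : ℝ => t^4/4 + μ * t^2) (t^3 + 2*μ*t) t := by
    have := ((hasDerivAt_pow 4 t).div_const 4).add ((hasDerivAt_pow 2 t).const_mul μ)
    exact this.congr_deriv (by norm_num; ring)
  have := (Real.hasDerivAt_sqrt hq.ne').comp t h1
  exact this.congr_deriv (by ring)

private lemma gsimp (μ : ℝ) (hμ : 0 < μ) {t : ℝ} (ht : 0 < t) :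
    (t^3 + 2*μ*t) / (2 * Real.sqrt (t^4/4 + μ * t^2))
      = (t^2 + 2*μ) / (2 * Real.sqrt (t^2/4 + μ)) := by
  have h1 : t^4/4 + μ * t^2 = t^2 * (t^2/4 + μ) := by ring
  rw [h1, Real.sqrt_mul (sq_nonneg t), Real.sqrt_sq ht.le]
  have hs : 0 < Real.sqrt (t^2/4 + μ) := Real.sqrt_pos.2 (by positivity)
  field_simp

private lemma gconvex (μ : ℝ) (hμ : 0 < μ) :
    StrictConvexOn ℝ (Set.Ici (0:ℝ)) (fun t : ℝ => Real.sqrt (t^4/4 + μ * t^2)) := by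
  apply StrictMonoOn.strictConvexOn_of_deriv (convex_Ici 0)
  · fun_prop
  · rw [interior_Ici]
    intro a ha b hb hab
    rw [(gderiv μ hμ ha).deriv, (gderiv μ hμ hb).deriv, gsimp μ hμ ha, gsimp μ hμ hb]
    have hua : (0:ℝ) < a^2/4 + μ := by positivity
    have hub : (0:ℝ) < b^2/4 + μ := by positivity
    set u := Real.sqrt (a^2/4 + μ) with hu
    set v := Real.sqrt (b^2/4 + μ) with hv
    have hu0 : 0 < u := Real.sqrt_pos.2 hua
    have hv0 : 0 < v := Real.sqrt_pos.2 hub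
    have hu2 : u^2 = a^2/4 + μ := Real.sq_sqrt hua.le
    have hv2 : v^2 = b^2/4 + μ := Real.sq_sqrt hub.le
    rw [div_lt_div_iff₀ (by positivity) (by positivity)]
    have ha' : (0:ℝ) < a := ha
    have hb' : (0:ℝ) < b := hb
    have hab2 : a^2 < b^2 := by nlinarith
    have key : ((a^2 + 2*μ) * (2*v))^2 < ((b^2 + 2*μ) * (2*u))^2 := by
      have e1 : ((a^2 + 2*μ) * (2*v))^2 = 4*(a^2+2*μ)^2*(b^2/4+μ) := by
        rw [mul_pow, mul_pow, hv2]; ring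
      have e2 : ((b^2 + 2*μ) * (2*u))^2 = 4*(b^2+2*μ)^2*(a^2/4+μ) := by
        rw [mul_pow, mul_pow, hu2]; ring
      rw [e1, e2]
      nlinarith [mul_nonneg (sub_pos.2 hab2).le (sq_nonneg (a*b)),
        mul_pos (sub_pos.2 hab2) hμ, mul_pos (mul_pos (sub_pos.2 hab2) hμ) hμ,
        sq_nonneg a, sq_nonneg b]
    exact lt_of_pow_lt_pow_left₀ 2 (by positivity) key

private lemma gmono (μ : ℝ) (hμ : 0 < μ) :
    StrictMonoOn (fun t : ℝ => Real.sqrt (t^4/4 + μ * t^2)) (Set.Ici (0:ℝ)) := by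
  intro a ha b hb hab
  have ha' : (0:ℝ) ≤ a := ha
  apply Real.sqrt_lt_sqrt (by positivity)
  have h2 : a^2 < b^2 := by nlinarith
  nlinarith [h2, sq_nonneg a, sq_nonneg b, mul_nonneg (sq_nonneg a) (sq_nonneg b)]

theorem stmt6 (μ : ℝ) (hμ : 0 < μ) :
    StrictConvexOn ℝ Set.univ
      (fun k : EuclideanSpace ℝ (Fin 3) => Real.sqrt (‖k‖^4/4 + μ * ‖k‖^2)) ∧
    Real.sqrt (‖(0 : EuclideanSpace ℝ (Fin 3))‖^4/4
        + μ * ‖(0 : EuclideanSpace ℝ (Fin 3))‖^2) = 0 := by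
  constructor
  · refine ⟨convex_univ, ?_⟩
    intro x _ y _ hxy a b ha hb hab
    have hg := gconvex μ hμ
    have hgm := gmono μ hμ
    by_cases hray : SameRay ℝ x y
    · have hne : ‖x‖ ≠ ‖y‖ := by
        intro h
        exact hxy (eq_of_norm_eq_of_norm_add_eq h (sameRay_iff_norm_add.mp hray))
      have hray2 : SameRay ℝ (a • x) (b • y) :=
        (hray.pos_smul_left ha).pos_smul_right hb
      have heq : ‖a • x + b • y‖ = a * ‖x‖ + b * ‖y‖ := by
        rw [sameRay_iff_norm_add.mp hray2, norm_smul, norm_smul,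
          Real.norm_of_nonneg ha.le, Real.norm_of_nonneg hb.le]
      simp only [heq]
      exact hg.2 (norm_nonneg x) (norm_nonneg y) hne ha hb hab
    · have hray2 : ¬ SameRay ℝ (a • x) (b • y) := by
        intro h
        have h2 := (h.pos_smul_left (inv_pos.2 ha)).pos_smul_right (inv_pos.2 hb)
        rw [inv_smul_smul₀ ha.ne', inv_smul_smul₀ hb.ne'] at h2
        exact hray h2
      have hlt : ‖a • x + b • y‖ < a * ‖x‖ + b * ‖y‖ := by
        have := norm_add_lt_of_not_sameRay hray2
        rwa [norm_smul, norm_smul, Real.norm_of_nonneg ha.le,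
          Real.norm_of_nonneg hb.le] at this
      calc Real.sqrt (‖a • x + b • y‖^4/4 + μ * ‖a • x + b • y‖^2)
          < Real.sqrt ((a * ‖x‖ + b * ‖y‖)^4/4 + μ * (a * ‖x‖ + b * ‖y‖)^2) :=
            hgm (Set.mem_Ici.2 (norm_nonneg _)) (Set.mem_Ici.2 (by positivity)) hlt
        _ ≤ a * Real.sqrt (‖x‖^4/4 + μ * ‖x‖^2) + b * Real.sqrt (‖y‖^4/4 + μ * ‖y‖^2) :=
            hg.convexOn.2 (norm_nonneg x) (norm_nonneg y) ha.le hb.le hab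
  · simp
end
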